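/- For every consistent layered automaton A over a finite alphabet Σ, the simple-by-priorities alternating parity automaton ⟦A⟧ is history deterministic: there exist a resolver σ for Eve and a resolver τ for Adam with L(⟦A⟧) = L(⟦A⟧,σ) = L(⟦A⟧,τ) = L(⟦A⟧,σ,τ). -/

import Mathlib

open scoped Classical

noncomputable section

/-! ### Infinite words and the parity condition -/

/-- The minimal value occurring infinitely often in a sequence of priorities;
for (eventually) bounded sequences this is the `liminf`. -/
def minInfOften (pi : ℕ → ℕ) : ℕ := sInf {x : ℕ | ∀ N : ℕ, ∃ n : ℕ, N ≤ n ∧ pi n = x}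

/-- The (min-)parity acceptance condition: the liminf of the priorities is even. -/
def ParityAccept (pi : ℕ → ℕ) : Prop := Even (minInfOften pi)

/-- Prepend a finite word to an infinite word. -/
def prependW {α : Type} (u : List α) (w : ℕ → α) : ℕ → α := fun i =>
  if h : i < u.length then u.get ⟨i, h⟩ else w (i - u.length)

/-- The prefix of length `n` of an infinite word, as a list. -/
def wordPrefix {α : Type} (w : ℕ → α) (n : ℕ) : List α := List.ofFn (fun i : Fin n => w i)

/-- Drop the first `n` letters of an infinite word. -/
def wordDrop {α : Type} (w : ℕ → α) (n : ℕ) : ℕ → α := fun i => w (n + i)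

/-- The periodic infinite word `v^ω` (junk if `v = []`). -/
def perWord {α : Type} [Inhabited α] (v : List α) : ℕ → α := fun i => v.getD (i % v.length) default

/-! ### Layered automata -/

/-- A layered automaton over the alphabet `α` with `d` layers.  The (disjoint) layers
are encoded by the function `layer : Q → [1,d]`; each layer is a deterministic
transition system (partial transition function `δ`, which stays inside the layer);
`μ` sends each state of layer `x+1` to its parent in layer `x` (and is the identity
on layer `1`) and is a morphism of transition systems; layer `1` is complete, carries
the initial state, and all its states are reachable from the initial state. -/
structure Layered (Q α : Type) (d : ℕ) where
  layer : Q → ℕ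
  layer_pos : ∀ q, 1 ≤ layer q
  layer_le : ∀ q, layer q ≤ d
  δ : Q → α → Option Q
  δ_layer : ∀ q a q', δ q a = some q' → layer q' = layer q
  μ : Q → Q
  μ_layer : ∀ q, 1 < layer q → layer (μ q) + 1 = layer q
  μ_id : ∀ q, layer q = 1 → μ q = q
  μ_morph : ∀ q a q', 1 < layer q → δ q a = some q' → δ (μ q) a = some (μ q')
  init : Q
  init_layer : layer init = 1
  complete1 : ∀ q a, layer q = 1 → (δ q a).isSome = true
  reach1 : ∀ q, layer q = 1 →
    Relation.ReflTransGen (fun p p' => layer p = 1 ∧ ∃ a, δ p a = some p') init q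

namespace Layered

variable {Q R α : Type} {d d' : ℕ}

/-- The run of the (deterministic) layer transition systems on a finite word. -/
def runList (A : Layered Q α d) : Q → List α → Option Q
  | q, [] => some q
  | q, a :: u =>
    match A.δ q a with
    | some q' => runList A q' u
    | none => none

/-- `μ̂_x q`: the ancestor of `q` in layer `x` (image under the composed morphisms). -/
def muHat (A : Layered Q α d) (x : ℕ) (q : Q) : Q := (A.μ)^[A.layer q - x] q

/-- A leaf state: a state that is not in the image of any of the morphisms `μ_x`. -/
def IsLeaf (A : Layered Q α d) (q : Q) : Prop := ∀ p, 1 < A.layer p → A.μ p ≠ q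

/-- `layer(q,a)`: the largest layer `x ≤ layer q` in which `δ_x (μ̂_x q) a` is defined. -/
def layerOf (A : Layered Q α d) (q : Q) (a : α) : ℕ :=
  Nat.findGreatest (fun x => (A.δ (A.muHat x q) a).isSome = true) (A.layer q)

/-- A state `p` is an ancestor of `q`. -/
def IsAncestor (A : Layered Q α d) (p q : Q) : Prop :=
  A.layer p ≤ A.layer q ∧ A.muHat (A.layer p) q = p

/-! #### Safe languages and strong acceptance -/

/-- Membership of a finite word in the `x`-safe language of `q`. -/
def SafeFin (A : Layered Q α d) (x : ℕ) (q : Q) (u : List α) : Prop :=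
  (A.runList (A.muHat x q) u).isSome = true

/-- Membership of an infinite word in the `x`-safe language of `q`. -/
def SafeInf (A : Layered Q α d) (x : ℕ) (q : Q) (w : ℕ → α) : Prop :=
  ∀ n : ℕ, A.SafeFin x q (wordPrefix w n)

/-- `w` is strongly accepted by the state `p` (which lies in the even layer `x = layer p`):
`w` is `x`-safe from `p` and no decomposition `w = u·w'` admits a state `p'` of layer `x+1`
with a `u`-run from `p` to the parent of `p'` in `T_x` such that `w'` is `(x+1)`-safe from `p'`. -/
def StronglyAcc (A : Layered Q α d) (p : Q) (w : ℕ → α) : Prop :=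
  Even (A.layer p) ∧ A.SafeInf (A.layer p) p w ∧
  ∀ (n : ℕ) (p' : Q), A.layer p' = A.layer p + 1 →
    A.runList p (wordPrefix w n) = some (A.μ p') →
    ¬ A.SafeInf (A.layer p') p' (wordDrop w n)

/-- `w` is strongly rejected by `p` (lying in an odd layer). -/
def StronglyRej (A : Layered Q α d) (p : Q) (w : ℕ → α) : Prop :=
  Odd (A.layer p) ∧ A.SafeInf (A.layer p) p w ∧
  ∀ (n : ℕ) (p' : Q), A.layer p' = A.layer p + 1 →
    A.runList p (wordPrefix w n) = some (A.μ p') →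
    ¬ A.SafeInf (A.layer p') p' (wordDrop w n)

/-- Consistency: no two states with the same layer-1 ancestor strongly accept
resp. strongly reject a common infinite word. -/
def Consistent (A : Layered Q α d) : Prop :=
  ¬ ∃ (p p' : Q) (w : ℕ → α), A.muHat 1 p = A.muHat 1 p' ∧
      A.StronglyAcc p w ∧ A.StronglyRej p' w

/-- `w` is ultimately safe in layer `x`, for the automaton started in the
layer-1 state `q0`. -/
def UltSafeFrom (A : Layered Q α d) (q0 : Q) (x : ℕ) (w : ℕ → α) : Prop :=
  ∃ (n : ℕ) (p : Q), A.layer p = x ∧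
    A.runList q0 (wordPrefix w n) = some (A.muHat 1 p) ∧
    A.SafeInf x p (wordDrop w n)

/-- Layered acceptance from `q0`: the maximal layer in which `w` is ultimately safe is even. -/
def LayeredAcceptFrom (A : Layered Q α d) (q0 : Q) (w : ℕ → α) : Prop :=
  ∃ x : ℕ, Even x ∧ A.UltSafeFrom q0 x w ∧ ∀ y : ℕ, A.UltSafeFrom q0 y w → y ≤ x

/-- Layered rejection from `q0`: the maximal layer in which `w` is ultimately safe is odd. -/
def LayeredRejectFrom (A : Layered Q α d) (q0 : Q) (w : ℕ → α) : Prop :=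
  ∃ x : ℕ, Odd x ∧ A.UltSafeFrom q0 x w ∧ ∀ y : ℕ, A.UltSafeFrom q0 y w → y ≤ x

/-! #### The semantics automaton `⟦A⟧` (a simple-by-priorities alternating parity automaton) -/

/-- The priority of the letter `a` in the state `q` of `⟦A⟧`. -/
def semPrio (A : Layered Q α d) (q : Q) (a : α) : ℕ := A.layerOf q a

/-- The transitions of `⟦A⟧` (between leaf states): `q —a→ q'` iff, for
`x = layer(q,a)`, we have `δ_x (μ̂_x q) a = μ̂_x q'`; the transition carries priority `x`. -/
def semStep (A : Layered Q α d) (q : Q) (a : α) (q' : Q) : Prop :=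
  A.IsLeaf q' ∧ A.δ (A.muHat (A.layerOf q a) q) a = some (A.muHat (A.layerOf q a) q')

/-- Runs of `⟦A⟧` over the infinite word `w`, starting in `p`. -/
def IsSemRun (A : Layered Q α d) (w : ℕ → α) (p : Q) (ρ : ℕ → Q) : Prop :=
  ρ 0 = p ∧ ∀ i : ℕ, A.semStep (ρ i) (w i) (ρ (i + 1))

/-- The sequence of priorities produced by a run of `⟦A⟧` over `w`. -/
def runPrios (A : Layered Q α d) (w : ℕ → α) (ρ : ℕ → Q) : ℕ → ℕ :=
  fun i => A.semPrio (ρ i) (w i)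

/-- A resolver for Eve in `⟦A⟧`: given the history (the finite run so far, as a list of
(state, letter) pairs), the current state and a letter of odd priority, it picks a successor. -/
def EveResolver (A : Layered Q α d) (σ : List (Q × α) → Q → α → Q) : Prop :=
  ∀ (h : List (Q × α)) (q : Q) (a : α), Odd (A.semPrio q a) → A.semStep q a (σ h q a)

/-- A resolver for Adam in `⟦A⟧` (resolving the even-priority steps). -/
def AdamResolver (A : Layered Q α d) (τ : List (Q × α) → Q → α → Q) : Prop :=
  ∀ (h : List (Q × α)) (q : Q) (a : α), Even (A.semPrio q a) → A.semStep q a (τ h q a)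

/-- A run is consistent with the Eve-resolver `σ`: every odd-priority step follows `σ`. -/
def ConsEve (A : Layered Q α d) (σ : List (Q × α) → Q → α → Q) (w : ℕ → α) (ρ : ℕ → Q) : Prop :=
  ∀ i : ℕ, Odd (A.semPrio (ρ i) (w i)) →
    ρ (i + 1) = σ (List.ofFn fun j : Fin i => (ρ (j : ℕ), w (j : ℕ))) (ρ i) (w i)

/-- A run is consistent with the Adam-resolver `τ`: every even-priority step follows `τ`. -/
def ConsAdam (A : Layered Q α d) (τ : List (Q × α) → Q → α → Q) (w : ℕ → α) (ρ : ℕ → Q) : Prop :=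
  ∀ i : ℕ, Even (A.semPrio (ρ i) (w i)) →
    ρ (i + 1) = τ (List.ofFn fun j : Fin i => (ρ (j : ℕ), w (j : ℕ))) (ρ i) (w i)

/-- Acceptance of `w` by `⟦A⟧` from the (leaf) state `p`: Eve has a winning strategy
in the game `G(⟦A⟧,w)`, i.e. a resolver all of whose consistent runs satisfy parity. -/
def SemAccept (A : Layered Q α d) (p : Q) (w : ℕ → α) : Prop :=
  ∃ σ : List (Q × α) → Q → α → Q, A.EveResolver σ ∧
    ∀ ρ : ℕ → Q, A.IsSemRun w p ρ → A.ConsEve σ w ρ → ParityAccept (A.runPrios w ρ)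

/-- Uniform semantic determinism: leaf states with the same layer-1 ancestor
recognise the same language in `⟦A⟧`. -/
def UnifSD (A : Layered Q α d) : Prop :=
  ∀ p q : Q, A.IsLeaf p → A.IsLeaf q → A.muHat 1 p = A.muHat 1 q →
    ∀ w : ℕ → α, (A.SemAccept p w ↔ A.SemAccept q w)

/-! #### Longest suffix resolvers -/

/-- `v` is a suffix-witness to `r`: the layer of `r` has a run labelled `v` ending in `r`. -/
def suffixReaches (A : Layered Q α d) (r : Q) (v : List α) : Prop :=
  ∃ p : Q, A.layer p = A.layer r ∧ A.runList p v = some r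

/-- The length of the longest suffix `v` of `u` such that the layer of `r` has a
run labelled `v` ending in `r`. -/
def longestSuffixLen (A : Layered Q α d) (u : List α) (r : Q) : ℕ :=
  Nat.findGreatest (fun k => k ≤ u.length ∧ A.suffixReaches r (u.drop (u.length - k))) u.length

/-- A longest suffix resolver for Eve, initialised to `u0`: a valid Eve-resolver that,
at a step of odd priority `x` after having read `v`, moves to an `a`-successor `q'`
maximising the length of the longest `(x+1)`-suffix of `u0·v·a` to `μ̂_{x+1} q'`. -/
def IsLongestSuffixResolverE (A : Layered Q α d) (u0 : List α)
    (σ : List (Q × α) → Q → α → Q) : Prop :=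
  A.EveResolver σ ∧
  ∀ (h : List (Q × α)) (q : Q) (a : α), Odd (A.semPrio q a) →
    ∀ q' : Q, A.semStep q a q' →
      A.longestSuffixLen (u0 ++ h.map Prod.snd ++ [a]) (A.muHat (A.semPrio q a + 1) q') ≤
      A.longestSuffixLen (u0 ++ h.map Prod.snd ++ [a]) (A.muHat (A.semPrio q a + 1) (σ h q a))

/-- A longest suffix resolver for Adam, initialised to `u0` (symmetric, for even priorities). -/
def IsLongestSuffixResolverA (A : Layered Q α d) (u0 : List α)
    (τ : List (Q × α) → Q → α → Q) : Prop :=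
  A.AdamResolver τ ∧
  ∀ (h : List (Q × α)) (q : Q) (a : α), Even (A.semPrio q a) →
    ∀ q' : Q, A.semStep q a q' →
      A.longestSuffixLen (u0 ++ h.map Prod.snd ++ [a]) (A.muHat (A.semPrio q a + 1) q') ≤
      A.longestSuffixLen (u0 ++ h.map Prod.snd ++ [a]) (A.muHat (A.semPrio q a + 1) (τ h q a))

/-! #### The random walk on `⟦A⟧` -/

/-- The uniform step probability of the random walk of `⟦A⟧`. -/
def stepProb (A : Layered Q α d) (q : Q) (a : α) (q' : Q) : ENNReal :=
  if A.semStep q a q' then ((Nat.card {p : Q // A.semStep q a p} : ENNReal))⁻¹ else 0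

/-- `m` is the Markov measure of the random walk of `⟦A⟧` over the word `w` started at `p`:
a probability measure on `ℕ → Q` whose cylinder probabilities are the products of the
uniform step probabilities. -/
def IsWalkMeasure [MeasurableSpace Q] (A : Layered Q α d) (w : ℕ → α) (p : Q)
    (m : MeasureTheory.Measure (ℕ → Q)) : Prop :=
  MeasureTheory.IsProbabilityMeasure m ∧
  ∀ (n : ℕ) (s : Fin (n + 1) → Q),
    m {ρ : ℕ → Q | ∀ i : Fin (n + 1), ρ (i : ℕ) = s i} =
      (if s 0 = p then 1 else 0) *
        ∏ i : Fin n, A.stepProb (s i.castSucc) (w (i : ℕ)) (s i.succ)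

/-! #### Normal form, centrality, safe minimality, central sequences -/

/-- Normal form: (N1) every layer `x ≥ 2` is a union of non-trivial SCCs, and
(N2) the safe language of every child is strictly smaller than that of its parent. -/
def NormalForm (A : Layered Q α d) : Prop :=
  ∀ q : Q, 2 ≤ A.layer q →
    (∀ (u : List α) (q' : Q), A.runList q u = some q' →
      ∃ v : List α, v ≠ [] ∧ A.runList q' v = some q) ∧
    (∀ p : Q, 1 < A.layer p → A.μ p = q →
      ∃ u : List α, (A.runList q u).isSome = true ∧ A.runList p u = none)

/-- Inclusion of `x`-safe languages. -/
def SafeLE (A : Layered Q α d) (x : ℕ) (p q : Q) : Prop :=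
  (∀ u : List α, A.SafeFin x p u → A.SafeFin x q u) ∧
  (∀ w : ℕ → α, A.SafeInf x p w → A.SafeInf x q w)

/-- Centralised: siblings (same parent) whose safe languages are included,
lie in the same SCC of their layer. -/
def Centralised (A : Layered Q α d) : Prop :=
  ∀ p q : Q, 2 ≤ A.layer p → A.layer q = A.layer p →
    A.muHat (A.layer p - 1) p = A.muHat (A.layer p - 1) q →
    A.SafeLE (A.layer p) p q →
    (∃ u : List α, A.runList p u = some q) ∧ (∃ v : List α, A.runList q v = some p)

/-- `L(p) = L(q)`: all leaves above (the layer-1 ancestor of) `p` and all leaves above `q`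
recognise the same language in `⟦A⟧`. -/
def LangEq1 (A : Layered Q α d) (p q : Q) : Prop :=
  ∀ l l' : Q, A.IsLeaf l → A.IsLeaf l' → A.muHat 1 l = A.muHat 1 p →
    A.muHat 1 l' = A.muHat 1 q → ∀ w : ℕ → α, (A.SemAccept l w ↔ A.SemAccept l' w)

/-- The equivalence `p ≈_x q`: language equivalence together with equality of all
`y`-safe languages for `2 ≤ y ≤ x`. -/
def ApproxEq (A : Layered Q α d) (x : ℕ) (p q : Q) : Prop :=
  A.LangEq1 p q ∧ ∀ y : ℕ, 2 ≤ y → y ≤ x →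
    ((∀ u : List α, A.SafeFin y p u ↔ A.SafeFin y q u) ∧
     (∀ w : ℕ → α, A.SafeInf y p w ↔ A.SafeInf y q w))

/-- Safe minimality: `≈_x`-equivalent states of the same layer are equal. -/
def SafeMinimal (A : Layered Q α d) : Prop :=
  ∀ p q : Q, A.layer p = A.layer q → A.ApproxEq (A.layer p) p q → p = q

/-- `z` is a central sequence for the state `p` (of layer `x = layer p`). -/
def IsCentralSeq (A : Layered Q α d) (p : Q) (z : List α) : Prop :=
  z ≠ [] ∧ A.runList p z = some p ∧
  (∀ q : Q, A.layer q = A.layer p →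
    A.muHat (A.layer p - 1) q = A.muHat (A.layer p - 1) p →
    (A.runList q z = some p ∨ A.runList q z = none)) ∧
  (∀ q' : Q, A.layer q' = A.layer p + 1 →
    A.muHat (A.layer p - 1) q' = A.muHat (A.layer p - 1) p →
    A.runList q' z = none)

end Layered

/-! ### Morphisms of layered automata -/

/-- A morphism of layered automata. -/
structure IsLayMorphism {Q R α : Type} {d d' : ℕ} (A : Layered Q α d) (B : Layered R α d')
    (φ : Q → R) : Prop where
  map_init : φ A.init = B.init
  map_step : ∀ q a q', A.δ q a = some q' → B.δ (φ q) a = some (φ q')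
  map_anc : ∀ p q, A.IsAncestor p q → B.IsAncestor (φ p) (φ q)

/-- A strong morphism of layered automata additionally preserves non-transitions. -/
def IsStrongLayMorphism {Q R α : Type} {d d' : ℕ} (A : Layered Q α d) (B : Layered R α d')
    (φ : Q → R) : Prop :=
  IsLayMorphism A B φ ∧ ∀ q a, A.δ q a = none → B.δ (φ q) a = none

/-- An isomorphism of layered automata: a bijection on states that restricts to
isomorphisms of the layer transition systems, preserves the initial state, and
commutes with the morphisms `μ`. -/
structure IsLayIso {Q R α : Type} {d d' : ℕ} (A : Layered Q α d) (B : Layered R α d')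
    (φ : Q ≃ R) : Prop where
  map_layer : ∀ q, B.layer (φ q) = A.layer q
  map_init : φ A.init = B.init
  map_mu : ∀ q, φ (A.μ q) = B.μ (φ q)
  map_step : ∀ q a, (A.δ q a).map φ = B.δ (φ q) a

/-- `L(⟦A⟧) = L(⟦B⟧)`: the semantics automata (with any choice of initial leaf states
above the respective initial states) accept the same infinite words. -/
def SemLangEq {Q R α : Type} {d d' : ℕ} (A : Layered Q α d) (B : Layered R α d') : Prop :=
  ∀ (p : Q) (q : R), A.IsLeaf p → A.muHat 1 p = A.init → B.IsLeaf q → B.muHat 1 q = B.init →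
    ∀ w : ℕ → α, (A.SemAccept p w ↔ B.SemAccept q w)

/-! ### Deterministic parity automata -/

/-- A deterministic parity automaton over `α` with priorities in `[1,d]`. -/
structure DPA (Q α : Type) (d : ℕ) where
  init : Q
  next : Q → α → Q
  prio : Q → α → ℕ
  prio_pos : ∀ q a, 1 ≤ prio q a
  prio_le : ∀ q a, prio q a ≤ d

namespace DPA

variable {Q α : Type} {d : ℕ}

/-- The unique run of a DPA on an infinite word. -/
def run (B : DPA Q α d) (w : ℕ → α) : ℕ → Q
  | 0 => B.init
  | n + 1 => B.next (run B w n) (w n)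

/-- Acceptance by a DPA: the priorities along the unique run satisfy parity. -/
def Accepts (B : DPA Q α d) (w : ℕ → α) : Prop :=
  ParityAccept (fun i => B.prio (B.run w i) (w i))

end DPA

/-- `L` is ω-regular: recognised by some deterministic parity automaton. -/
def IsOmegaRegular {α : Type} (L : Set (ℕ → α)) : Prop :=
  ∃ (n d : ℕ) (B : DPA (Fin n) α d), ∀ w : ℕ → α, w ∈ L ↔ B.Accepts w

/-! ### Nondeterministic coBüchi automata -/

/-- A (complete) nondeterministic coBüchi automaton: transitions carry priorities in `{1,2}`. -/
structure NCA (Q α : Type) where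
  init : Q
  trans : Q → α → ℕ → Q → Prop
  prio_mem : ∀ q a x q', trans q a x q' → x = 1 ∨ x = 2
  complete : ∀ q a, ∃ x q', trans q a x q'

namespace NCA

variable {Q α : Type}

/-- Nondeterministic acceptance from the state `q`. -/
def AcceptFrom (B : NCA Q α) (q : Q) (w : ℕ → α) : Prop :=
  ∃ (ρ : ℕ → Q) (pri : ℕ → ℕ), ρ 0 = q ∧
    (∀ i : ℕ, B.trans (ρ i) (w i) (pri i) (ρ (i + 1))) ∧ ParityAccept pri

/-- Semantic determinism: every `a`-successor of `p` recognises `a⁻¹ L(p)`. -/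
def SemDet (B : NCA Q α) : Prop :=
  ∀ p a x q, B.trans p a x q →
    ∀ w : ℕ → α, (B.AcceptFrom q w ↔ B.AcceptFrom p (prependW [a] w))

/-- Safe determinism: all `a`-transitions from a state carry the same priority, and
there is at most one `a`-transition of priority `2` from each state. -/
def SafeDet (B : NCA Q α) : Prop :=
  (∀ q a x q' x' q'', B.trans q a x q' → B.trans q a x' q'' → x = x') ∧
  (∀ q a q' q'', B.trans q a 2 q' → B.trans q a 2 q'' → q' = q'')

/-- 1-saturation: priority-1 transitions go to all language-equivalent states. -/
def OneSaturated (B : NCA Q α) : Prop :=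
  ∀ q a p p', B.trans q a 1 p →
    (∀ w : ℕ → α, (B.AcceptFrom p' w ↔ B.AcceptFrom p w)) → B.trans q a 1 p'

end NCA

/-! ### Simple-by-priorities alternating parity automata (abstract) -/

/-- A simple-by-priorities alternating parity automaton: a complete transition system
over `α × [1,d]` in which all `a`-transitions from a state carry the same priority. -/
structure SPA (Q α : Type) (d : ℕ) where
  init : Q
  step : Q → α → Q → Prop
  prio : Q → α → ℕ
  prio_pos : ∀ q a, 1 ≤ prio q a
  prio_le : ∀ q a, prio q a ≤ d
  complete : ∀ q a, ∃ q', step q a q'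

/-! ### The congruence on tuples of finite words -/

/-- The data of the congruence at one level (tuples of a fixed length,
represented as reversed lists of components: the head is the last component). -/
structure CongrLevel (α : Type) where
  bot : List (List α) → Prop
  eq : List (List α) → List (List α) → Prop
  ptd : List (List α) → Prop

/-- Concatenate a finite word to the last component of a tuple
(tuples are represented as reversed lists: the head is the last component). -/
def tcat {α : Type} (t : List (List α)) (v : List α) : List (List α) :=
  match t with
  | h :: rest => (h ++ v) :: rest
  | [] => []

/-- Merge the last two components of a tuple. -/
def tmerge {α : Type} (t : List (List α)) : List (List α) :=
  match t with
  | u' :: h :: rest => (h ++ u') :: rest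
  | t' => t'

/-- The congruence data at level `n` (handling tuples of length `n+1`), defined by
recursion on the level, following the inductive definition of `≈ ⊥`, `≈` and `pointed`. -/
def congrData {α : Type} [Inhabited α] (L : Set (ℕ → α)) : ℕ → CongrLevel α
  | 0 =>
    { bot := fun _ => False
      eq := fun t s =>
        match t, s with
        | [u], [v] => ∀ w : ℕ → α, (prependW u w ∈ L ↔ prependW v w ∈ L)
        | _, _ => False
      ptd := fun _ => True }
  | n + 1 =>
    let C := congrData L n
    let bot : List (List α) → Prop := fun t =>
      match t with
      | u' :: ubar =>
        C.bot (tmerge (u' :: ubar)) ∨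
        ∀ w : List α, w ≠ [] → C.eq (tcat (tmerge (u' :: ubar)) w) ubar →
          ((prependW ubar.reverse.flatten (perWord (u' ++ w)) ∈ L) ↔ Even (n + 1))
      | [] => True
    let eq : List (List α) → List (List α) → Prop := fun t s =>
      C.eq (tmerge t) (tmerge s) ∧ ∀ v : List α, (bot (tcat t v) ↔ bot (tcat s v))
    let ptd : List (List α) → Prop := fun t =>
      match t with
      | u' :: ubar =>
        ¬ bot (u' :: ubar) ∧ C.ptd ubar ∧
        ∀ (vbar : List (List α)) (v' : List α), vbar.length = n + 1 → C.ptd vbar →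
          C.eq (tcat vbar v') ubar → ¬ bot ((v' ++ u') :: vbar) →
          eq ((v' ++ u') :: vbar) (u' :: ubar)
      | [] => False
    { bot := bot, eq := eq, ptd := ptd }

/-- `t ≈ ⊥` (for a nonempty tuple `t`, in reversed representation). -/
def TupBot {α : Type} [Inhabited α] (L : Set (ℕ → α)) (t : List (List α)) : Prop :=
  (congrData L (t.length - 1)).bot t

/-- `t ≈ s` (for nonempty tuples of the same length, in reversed representation). -/
def TupEq {α : Type} [Inhabited α] (L : Set (ℕ → α)) (t s : List (List α)) : Prop :=
  t.length = s.length ∧ (congrData L (t.length - 1)).eq t s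

/-- `t` is pointed. -/
def TupPointed {α : Type} [Inhabited α] (L : Set (ℕ → α)) (t : List (List α)) : Prop :=
  (congrData L (t.length - 1)).ptd t

/-- `cls` exhibits `A` as (a copy of) the congruence automaton `A_≈` of `L`: its states
are the `≈`-classes of pointed tuples (the layer being the tuple length), transitions
are given by concatenation in the last component, the initial state is the class of
`(ε)`, and the morphisms are given by merging the last two components. -/
structure IsCongrAut {α : Type} [Inhabited α] (L : Set (ℕ → α)) {Q : Type} {d : ℕ}
    (A : Layered Q α d) (cls : (t : List (List α)) → TupPointed L t → Q) : Prop where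
  surj : ∀ q : Q, ∃ (t : List (List α)) (ht : TupPointed L t), cls t ht = q
  cls_eq : ∀ t ht s hs, cls t ht = cls s hs ↔ TupEq L t s
  layer_eq : ∀ t ht, A.layer (cls t ht) = t.length
  init_eq : ∀ h : TupPointed L [([] : List α)], cls [([] : List α)] h = A.init
  step_some : ∀ t ht (a : α) (h' : TupPointed L (tcat t [a])),
    A.δ (cls t ht) a = some (cls (tcat t [a]) h')
  step_none : ∀ t ht (a : α), TupBot L (tcat t [a]) → A.δ (cls t ht) a = none
  mu_eq : ∀ (u' : List α) (ubar : List (List α)) (h : TupPointed L (u' :: ubar))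
    (h' : TupPointed L (tmerge (u' :: ubar))), ubar ≠ [] →
    A.μ (cls (u' :: ubar) h) = cls (tmerge (u' :: ubar)) h'

end

/-! ### Auxiliary development for Statement 2 -/

noncomputable section AuxStatement2

open scoped Classical

section Words

variable {α : Type}

lemma wordPrefix_length (w : ℕ → α) (n : ℕ) : (wordPrefix w n).length = n := by
  simp [wordPrefix]

lemma wordPrefix_zero (w : ℕ → α) : wordPrefix w 0 = [] := by
  simp [wordPrefix]

lemma wordPrefix_succ (w : ℕ → α) (n : ℕ) :
    wordPrefix w (n + 1) = wordPrefix w n ++ [w n] := by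
  simp only [wordPrefix, List.ofFn_succ', List.concat_eq_append, Fin.val_last]
  congr 1

lemma wordDrop_zero (w : ℕ → α) : wordDrop w 0 = w := by
  funext i; simp [wordDrop]

lemma wordDrop_wordDrop (w : ℕ → α) (m k : ℕ) :
    wordDrop (wordDrop w m) k = wordDrop w (m + k) := by
  funext i; simp [wordDrop, add_assoc]

lemma wordPrefix_add (w : ℕ → α) (m k : ℕ) :
    wordPrefix w (m + k) = wordPrefix w m ++ wordPrefix (wordDrop w m) k := by
  simp only [wordPrefix, wordDrop, List.ofFn_add]
  congr 1

lemma wordPrefix_drop (w : ℕ → α) (n m : ℕ) :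
    (wordPrefix w n).drop m = wordPrefix (wordDrop w m) (n - m) := by
  rcases le_or_gt m n with h | h
  · have h1 : wordPrefix w n = wordPrefix w m ++ wordPrefix (wordDrop w m) (n - m) := by
      rw [← wordPrefix_add]; congr 1; omega
    rw [h1, List.drop_left' (wordPrefix_length w m)]
  · rw [List.drop_eq_nil_of_le (by simp [wordPrefix_length]; omega)]
    have : n - m = 0 := by omega
    rw [this, wordPrefix_zero]

/-- segment split: for `b ≤ j ≤ j'`. -/
lemma wordSeg_split (w : ℕ → α) {b j j' : ℕ} (hbj : b ≤ j) (hjj' : j ≤ j') :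
    wordPrefix (wordDrop w b) (j' - b) =
      wordPrefix (wordDrop w b) (j - b) ++ wordPrefix (wordDrop w j) (j' - j) := by
  have h1 : j' - b = (j - b) + (j' - j) := by omega
  rw [h1, wordPrefix_add, wordDrop_wordDrop]
  have : b + (j - b) = j := by omega
  rw [this]

end Words

namespace Layered

variable {Q α : Type} {d : ℕ} (A : Layered Q α d)

lemma runList_nil (q : Q) : A.runList q [] = some q := rfl

lemma runList_cons (q : Q) (a : α) (u : List α) :
    A.runList q (a :: u) = (A.δ q a).bind fun q' => A.runList q' u := by
  cases h : A.δ q a <;> simp [Layered.runList, h]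

lemma runList_append (q : Q) (u v : List α) :
    A.runList q (u ++ v) = (A.runList q u).bind fun p => A.runList p v := by
  induction u generalizing q with
  | nil => simp [runList_nil]
  | cons a u ih =>
    rw [List.cons_append, runList_cons, runList_cons]
    cases h : A.δ q a with
    | none => simp
    | some q1 => simp [ih]

lemma runList_none_append (q : Q) {u : List α} (h : A.runList q u = none) (v : List α) :
    A.runList q (u ++ v) = none := by
  rw [runList_append, h]; rfl

lemma runList_isSome_of_append {q : Q} {u v : List α}
    (h : (A.runList q (u ++ v)).isSome) : (A.runList q u).isSome := by
  rw [runList_append] at h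
  cases h' : A.runList q u with
  | none => rw [h'] at h; simp at h
  | some p => simp

lemma runList_layer {q q' : Q} {u : List α} (h : A.runList q u = some q') :
    A.layer q' = A.layer q := by
  induction u generalizing q with
  | nil => rw [runList_nil] at h; cases h; rfl
  | cons a u ih =>
    rw [runList_cons] at h
    cases hδ : A.δ q a with
    | none => rw [hδ] at h; simp at h
    | some q1 =>
      rw [hδ] at h; simp at h
      rw [ih h]; exact A.δ_layer q a q1 hδ

lemma runList_single (q : Q) (a : α) :
    A.runList q [a] = A.δ q a := by
  rw [runList_cons]
  cases h : A.δ q a <;> simp [runList_nil]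

/-! #### `muHat` lemmas -/

lemma layer_mu_iter {q : Q} : ∀ k : ℕ, k + 1 ≤ A.layer q →
    A.layer ((A.μ)^[k] q) = A.layer q - k := by
  intro k
  induction k with
  | zero => intro _; simp
  | succ k ih =>
    intro hk
    have hik : A.layer ((A.μ)^[k] q) = A.layer q - k := ih (by omega)
    have h1 : 1 < A.layer ((A.μ)^[k] q) := by omega
    have := A.μ_layer _ h1
    rw [Function.iterate_succ_apply']
    omega

lemma layer_muHat {q : Q} {x : ℕ} (hx1 : 1 ≤ x) (hxq : x ≤ A.layer q) :
    A.layer (A.muHat x q) = x := by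
  have hq1 := A.layer_pos q
  have := A.layer_mu_iter (q := q) (A.layer q - x) (by omega)
  simp only [Layered.muHat]
  omega

lemma muHat_self {q : Q} {x : ℕ} (h : A.layer q = x) : A.muHat x q = q := by
  simp [Layered.muHat, h]

lemma muHat_muHat {q : Q} {z x : ℕ} (hz1 : 1 ≤ z) (hzx : z ≤ x) (hx : x ≤ A.layer q) :
    A.muHat z (A.muHat x q) = A.muHat z q := by
  have hx1 : 1 ≤ x := le_trans hz1 hzx
  have hl : A.layer (A.muHat x q) = x := A.layer_muHat hx1 hx
  have h1 : A.muHat z (A.muHat x q) = (A.μ)^[x - z] ((A.μ)^[A.layer q - x] q) := by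
    rw [Layered.muHat, hl]; rfl
  rw [h1, ← Function.iterate_add_apply, Layered.muHat]
  congr 1
  omega

lemma mu_muHat {q : Q} {x : ℕ} (h : x + 1 ≤ A.layer q) :
    A.μ (A.muHat (x + 1) q) = A.muHat x q := by
  simp only [Layered.muHat]
  rw [show A.layer q - x = (A.layer q - (x + 1)) + 1 from by omega,
    Function.iterate_succ_apply']

lemma muHat_of_succ_layer {q : Q} {x : ℕ} (h : A.layer q = x + 1) :
    A.muHat x q = A.μ q := by
  simp [Layered.muHat, h]

/-! #### projections along `μ` -/

lemma delta_iter_proj {q q' : Q} {a : α} (h : A.δ q a = some q') :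
    ∀ k : ℕ, k + 1 ≤ A.layer q → A.δ ((A.μ)^[k] q) a = some ((A.μ)^[k] q') := by
  intro k
  induction k with
  | zero => intro _; exact h
  | succ k ih =>
    intro hk
    have hik := ih (by omega)
    have hl : A.layer ((A.μ)^[k] q) = A.layer q - k := A.layer_mu_iter k (by omega)
    have h1 : 1 < A.layer ((A.μ)^[k] q) := by omega
    have := A.μ_morph _ a _ h1 hik
    rw [Function.iterate_succ_apply', Function.iterate_succ_apply']
    exact this

lemma delta_proj {q q' : Q} {a : α} {z : ℕ} (hz1 : 1 ≤ z) (hz : z ≤ A.layer q)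
    (h : A.δ q a = some q') : A.δ (A.muHat z q) a = some (A.muHat z q') := by
  have hlq' : A.layer q' = A.layer q := A.δ_layer q a q' h
  have := A.delta_iter_proj h (A.layer q - z) (by omega)
  simpa [Layered.muHat, hlq'] using this

lemma runList_proj {q q' : Q} {u : List α} {z : ℕ} (hz1 : 1 ≤ z) (hz : z ≤ A.layer q)
    (h : A.runList q u = some q') : A.runList (A.muHat z q) u = some (A.muHat z q') := by
  induction u generalizing q with
  | nil => rw [runList_nil] at h; cases h; exact A.runList_nil _
  | cons a u ih =>
    rw [runList_cons] at h ⊢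
    cases hδ : A.δ q a with
    | none => rw [hδ] at h; simp at h
    | some q1 =>
      rw [hδ] at h; simp only [Option.bind_some] at h
      have hδ' := A.delta_proj hz1 hz hδ
      rw [hδ', Option.bind_some]
      exact ih (by rw [A.δ_layer q a q1 hδ]; exact hz) h

/-! #### `layerOf` and `semStep` -/

lemma one_le_layerOf (q : Q) (a : α) : 1 ≤ A.layerOf q a := by
  apply Nat.le_findGreatest (A.layer_pos q)
  have h1 : A.layer (A.muHat 1 q) = 1 := A.layer_muHat le_rfl (A.layer_pos q)
  exact A.complete1 _ a h1

lemma layerOf_le (q : Q) (a : α) : A.layerOf q a ≤ A.layer q :=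
  Nat.findGreatest_le _

lemma layerOf_isSome (q : Q) (a : α) : (A.δ (A.muHat (A.layerOf q a) q) a).isSome = true := by
  have h1 : A.layer (A.muHat 1 q) = 1 := A.layer_muHat le_rfl (A.layer_pos q)
  exact Nat.findGreatest_spec (P := fun x => (A.δ (A.muHat x q) a).isSome = true)
    (m := 1) (n := A.layer q) (A.layer_pos q) (A.complete1 _ a h1)

lemma layerOf_none {q : Q} {a : α} {z : ℕ} (hgt : A.layerOf q a < z) (hle : z ≤ A.layer q) :
    A.δ (A.muHat z q) a = none := by
  have := Nat.findGreatest_is_greatest (P := fun x => (A.δ (A.muHat x q) a).isSome = true)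
    (n := A.layer q) hgt hle
  simpa [Option.not_isSome_iff_eq_none] using this

lemma semStep_layer_le {q q' : Q} {a : α} (h : A.semStep q a q') :
    A.layerOf q a ≤ A.layer q' := by
  by_contra hlt
  push_neg at hlt
  have hq'x : A.muHat (A.layerOf q a) q' = q' := by
    simp [Layered.muHat, Nat.sub_eq_zero_of_le (le_of_lt hlt)]
  have h2 := h.2
  rw [hq'x] at h2
  have := A.δ_layer _ _ _ h2
  rw [A.layer_muHat (A.one_le_layerOf q a) (A.layerOf_le q a)] at this
  omega

lemma semStep_proj {q q' : Q} {a : α} {z : ℕ} (h : A.semStep q a q')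
    (hz1 : 1 ≤ z) (hz : z ≤ A.layerOf q a) :
    A.δ (A.muHat z q) a = some (A.muHat z q') := by
  set x := A.layerOf q a with hx
  have hx1 : 1 ≤ x := A.one_le_layerOf q a
  have hxq : x ≤ A.layer q := A.layerOf_le q a
  have hxq' : x ≤ A.layer q' := A.semStep_layer_le h
  have hlx : A.layer (A.muHat x q) = x := A.layer_muHat hx1 hxq
  have := A.delta_proj (q := A.muHat x q) (q' := A.muHat x q') hz1 (by omega) h.2
  rwa [A.muHat_muHat hz1 hz hxq, A.muHat_muHat hz1 hz hxq'] at this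

/-! #### leaves -/

lemma exists_leaf_above_aux : ∀ (k : ℕ) (r : Q), d - A.layer r ≤ k →
    ∃ p, A.IsLeaf p ∧ A.layer r ≤ A.layer p ∧ A.muHat (A.layer r) p = r := by
  intro k
  induction k with
  | zero =>
    intro r hr
    refine ⟨r, ?_, le_rfl, A.muHat_self rfl⟩
    intro p hp hμ
    have := A.μ_layer p hp
    have := A.layer_le p
    have := A.layer_le r
    have : A.layer r + 1 = A.layer p := by rw [← hμ] at this ⊢; omega
    omega
  | succ k ih =>
    intro r hr
    by_cases hex : ∃ p, 1 < A.layer p ∧ A.μ p = r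
    · obtain ⟨p, hp1, hpμ⟩ := hex
      have hpl : A.layer p = A.layer r + 1 := by
        have := A.μ_layer p hp1; rw [hpμ] at this; omega
      have hpd := A.layer_le p
      obtain ⟨ℓ, hℓleaf, hℓge, hℓμ⟩ := ih p (by omega)
      refine ⟨ℓ, hℓleaf, by omega, ?_⟩
      have : A.μ (A.muHat (A.layer r + 1) ℓ) = A.muHat (A.layer r) ℓ :=
        A.mu_muHat (by omega)
      rw [← this, show A.layer r + 1 = A.layer p from hpl.symm, hℓμ, hpμ]
    · refine ⟨r, ?_, le_rfl, A.muHat_self rfl⟩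
      intro p hp hμ
      exact hex ⟨p, hp, hμ⟩

lemma exists_leaf_above (r : Q) :
    ∃ p, A.IsLeaf p ∧ A.layer r ≤ A.layer p ∧ A.muHat (A.layer r) p = r :=
  A.exists_leaf_above_aux (d - A.layer r) r le_rfl

lemma semStep_exists (q : Q) (a : α) : ∃ q', A.semStep q a q' := by
  set x := A.layerOf q a with hx
  obtain ⟨r, hr⟩ := Option.isSome_iff_exists.1 (A.layerOf_isSome q a)
  have hrl : A.layer r = x := by
    have := A.δ_layer _ _ _ hr
    rw [A.layer_muHat (A.one_le_layerOf q a) (A.layerOf_le q a)] at this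
    exact this
  obtain ⟨p, hpleaf, hpge, hpμ⟩ := A.exists_leaf_above r
  refine ⟨p, hpleaf, ?_⟩
  rw [hrl] at hpμ
  rw [hpμ]
  exact hr

/-- realize a given layer-`(x+1)` child as a `semStep` target -/
lemma semStep_realize {q : Q} {a : α} {t : Q}
    (hlt : A.layer t = A.layerOf q a + 1)
    (hδ : A.δ (A.muHat (A.layerOf q a) q) a = some (A.μ t)) :
    ∃ ℓ, A.semStep q a ℓ ∧ A.layerOf q a + 1 ≤ A.layer ℓ ∧ A.muHat (A.layerOf q a + 1) ℓ = t := by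
  obtain ⟨ℓ, hleaf, hge, hμ⟩ := A.exists_leaf_above t
  rw [hlt] at hμ hge
  refine ⟨ℓ, ⟨hleaf, ?_⟩, hge, hμ⟩
  have h1 : A.μ (A.muHat (A.layerOf q a + 1) ℓ) = A.muHat (A.layerOf q a) ℓ :=
    A.mu_muHat (by omega)
  rw [hμ] at h1
  rw [← h1]
  exact hδ

/-! #### the resolver `θ` -/

lemma theta_exists [Fintype Q] (h : List (Q × α)) (q : Q) (a : α) :
    ∃ q', A.semStep q a q' ∧
      ((∃ q'', A.semStep q a q'' ∧ A.layerOf q a + 1 ≤ A.layer q'') →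
        (A.layerOf q a + 1 ≤ A.layer q' ∧
          ∀ q'', A.semStep q a q'' → A.layerOf q a + 1 ≤ A.layer q'' →
            A.longestSuffixLen (h.map Prod.snd ++ [a]) (A.muHat (A.layerOf q a + 1) q'') ≤
            A.longestSuffixLen (h.map Prod.snd ++ [a]) (A.muHat (A.layerOf q a + 1) q'))) := by
  by_cases hex : ∃ q'', A.semStep q a q'' ∧ A.layerOf q a + 1 ≤ A.layer q''
  · obtain ⟨q1, hq1, hl1⟩ := hex
    have hne : (Finset.univ.filter
        (fun q' => A.semStep q a q' ∧ A.layerOf q a + 1 ≤ A.layer q')).Nonempty :=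
      ⟨q1, by simp [hq1]; omega⟩
    obtain ⟨b, hb, hmax⟩ := Finset.exists_max_image _
      (fun q' => A.longestSuffixLen (h.map Prod.snd ++ [a])
        (A.muHat (A.layerOf q a + 1) q')) hne
    simp only [Finset.mem_filter, Finset.mem_univ, true_and] at hb hmax
    exact ⟨b, hb.1, fun _ => ⟨hb.2, fun q'' hs hl => hmax q'' ⟨hs, hl⟩⟩⟩
  · obtain ⟨q', hq'⟩ := A.semStep_exists q a
    exact ⟨q', hq', fun hx => absurd hx hex⟩

/-- The resolver used for both Eve and Adam. -/
noncomputable def theta [Fintype Q] : List (Q × α) → Q → α → Q :=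
  fun h q a => (A.theta_exists h q a).choose

lemma theta_step [Fintype Q] (h : List (Q × α)) (q : Q) (a : α) :
    A.semStep q a (A.theta h q a) :=
  (A.theta_exists h q a).choose_spec.1

lemma theta_opt [Fintype Q] (h : List (Q × α)) (q : Q) (a : α)
    (hex : ∃ q'', A.semStep q a q'' ∧ A.layerOf q a + 1 ≤ A.layer q'') :
    A.layerOf q a + 1 ≤ A.layer (A.theta h q a) ∧
      ∀ q'', A.semStep q a q'' → A.layerOf q a + 1 ≤ A.layer q'' →
        A.longestSuffixLen (h.map Prod.snd ++ [a]) (A.muHat (A.layerOf q a + 1) q'') ≤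
        A.longestSuffixLen (h.map Prod.snd ++ [a]) (A.muHat (A.layerOf q a + 1) (A.theta h q a)) :=
  (A.theta_exists h q a).choose_spec.2 hex

lemma theta_eveResolver [Fintype Q] : A.EveResolver A.theta :=
  fun h q a _ => A.theta_step h q a

lemma theta_adamResolver [Fintype Q] : A.AdamResolver A.theta :=
  fun h q a _ => A.theta_step h q a

/-! #### runs along an infinite word -/

lemma run_seg {w : ℕ → α} {p : Q} {ρ : ℕ → Q} (hrun : A.IsSemRun w p ρ)
    {z N : ℕ} (hz1 : 1 ≤ z) (hp : ∀ i, N ≤ i → z ≤ A.layerOf (ρ i) (w i)) :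
    ∀ k, z ≤ A.layer (ρ (N + k)) ∧
      A.runList (A.muHat z (ρ N)) (wordPrefix (wordDrop w N) k) =
        some (A.muHat z (ρ (N + k))) := by
  intro k
  induction k with
  | zero =>
    constructor
    · exact le_trans (hp N le_rfl) (A.layerOf_le _ _)
    · rw [wordPrefix_zero]; exact A.runList_nil _
  | succ k ih =>
    obtain ⟨ihl, ihr⟩ := ih
    have hstep := hrun.2 (N + k)
    have hz2 : z ≤ A.layerOf (ρ (N + k)) (w (N + k)) := hp _ (by omega)
    have hδ := A.semStep_proj hstep hz1 hz2
    constructor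
    · rw [show N + (k + 1) = (N + k) + 1 from by omega]
      exact le_trans hz2 (A.semStep_layer_le hstep)
    · rw [wordPrefix_succ, runList_append, ihr, Option.bind_some]
      have h1 : wordDrop w N k = w (N + k) := rfl
      rw [h1, runList_single]
      rw [show N + (k + 1) = (N + k) + 1 from by omega]
      exact hδ

lemma runList_layer1_isSome {q : Q} (hq : A.layer q = 1) (v : ℕ → α) :
    ∀ n, (A.runList q (wordPrefix v n)).isSome = true := by
  intro n
  induction n with
  | zero => rw [wordPrefix_zero, runList_nil]; rfl
  | succ n ih =>
    obtain ⟨q1, hq1⟩ := Option.isSome_iff_exists.1 ih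
    have hl1 : A.layer q1 = 1 := by rw [A.runList_layer hq1, hq]
    rw [wordPrefix_succ, runList_append, hq1, Option.bind_some, runList_single]
    exact A.complete1 q1 (v n) hl1

lemma ultSafe_one (w : ℕ → α) : A.UltSafeFrom A.init 1 w := by
  refine ⟨0, A.init, A.init_layer, ?_, ?_⟩
  · rw [wordPrefix_zero, A.muHat_self A.init_layer, runList_nil]
  · rw [wordDrop_zero]
    intro n
    unfold Layered.SafeFin
    rw [A.muHat_self A.init_layer]
    exact A.runList_layer1_isSome A.init_layer w n

lemma ultSafe_le_d {q0' : Q} {x : ℕ} {w : ℕ → α} (h : A.UltSafeFrom q0' x w) : x ≤ d := by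
  obtain ⟨n, p, hl, _, _⟩ := h
  rw [← hl]; exact A.layer_le p

lemma ult_of_eventually {w : ℕ → α} {q0 : Q} {ρ : ℕ → Q} (hrun : A.IsSemRun w q0 ρ)
    (hq0' : A.muHat 1 q0 = A.init) {z N : ℕ} (hz1 : 1 ≤ z)
    (hp : ∀ i, N ≤ i → z ≤ A.layerOf (ρ i) (w i)) :
    A.UltSafeFrom A.init z w := by
  have hseg := A.run_seg hrun hz1 hp
  have hzN : z ≤ A.layer (ρ N) := (hseg 0).1
  refine ⟨N, A.muHat z (ρ N), A.layer_muHat hz1 hzN, ?_, ?_⟩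
  · have h1 := (A.run_seg hrun le_rfl
      (fun i _ => A.one_le_layerOf (ρ i) (w i)) (N := 0) N).2
    rw [wordDrop_zero, hrun.1, hq0'] at h1
    rw [A.muHat_muHat le_rfl hz1 hzN]
    simpa using h1
  · intro n
    unfold Layered.SafeFin
    rw [A.muHat_self (A.layer_muHat hz1 hzN), (hseg n).2]
    rfl

/-! #### building runs from resolvers -/

noncomputable def buildRun (w : ℕ → α) (q0 : Q)
    (f g : List (Q × α) → Q → α → Q) : ℕ → Q × List (Q × α)
  | 0 => (q0, [])
  | i + 1 =>
    let st := buildRun w q0 f g i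
    (if Odd (A.semPrio st.1 (w i)) then f st.2 st.1 (w i) else g st.2 st.1 (w i),
      st.2 ++ [(st.1, w i)])

lemma buildRun_fst_succ (w : ℕ → α) (q0 : Q) (f g : List (Q × α) → Q → α → Q) (i : ℕ) :
    (A.buildRun w q0 f g (i + 1)).1 =
      (if Odd (A.semPrio (A.buildRun w q0 f g i).1 (w i)) then
        f (A.buildRun w q0 f g i).2 (A.buildRun w q0 f g i).1 (w i)
      else g (A.buildRun w q0 f g i).2 (A.buildRun w q0 f g i).1 (w i)) := rfl

lemma buildRun_hist (w : ℕ → α) (q0 : Q) (f g : List (Q × α) → Q → α → Q) :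
    ∀ i, (A.buildRun w q0 f g i).2 =
      List.ofFn (fun j : Fin i => ((A.buildRun w q0 f g (j : ℕ)).1, w (j : ℕ))) := by
  intro i
  induction i with
  | zero => simp [Layered.buildRun]
  | succ i ih =>
    rw [List.ofFn_succ']
    simp only [List.concat_eq_append, Fin.coe_castSucc, Fin.val_last]
    rw [show (A.buildRun w q0 f g (i + 1)).2 =
      (A.buildRun w q0 f g i).2 ++ [((A.buildRun w q0 f g i).1, w i)] from rfl, ih]

lemma buildRun_isSemRun {w : ℕ → α} {q0 : Q} {f g : List (Q × α) → Q → α → Q}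
    (hf : A.EveResolver f) (hg : A.AdamResolver g) :
    A.IsSemRun w q0 (fun i => (A.buildRun w q0 f g i).1) := by
  refine ⟨rfl, fun i => ?_⟩
  dsimp only
  rw [A.buildRun_fst_succ]
  by_cases h : Odd (A.semPrio (A.buildRun w q0 f g i).1 (w i))
  · rw [if_pos h]; exact hf _ _ _ h
  · rw [if_neg h]; exact hg _ _ _ (Nat.not_odd_iff_even.1 h)

lemma buildRun_consEve {w : ℕ → α} {q0 : Q} {f g : List (Q × α) → Q → α → Q} :
    A.ConsEve f w (fun i => (A.buildRun w q0 f g i).1) := by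
  intro i hodd
  dsimp only at hodd ⊢
  rw [A.buildRun_fst_succ, if_pos hodd, A.buildRun_hist]

lemma buildRun_consAdam {w : ℕ → α} {q0 : Q} {f g : List (Q × α) → Q → α → Q} :
    A.ConsAdam g w (fun i => (A.buildRun w q0 f g i).1) := by
  intro i heven
  dsimp only at heven ⊢
  rw [A.buildRun_fst_succ, if_neg (Nat.not_odd_iff_even.2 heven), A.buildRun_hist]

lemma longestSuffixLen_spec (u : List α) (r : Q) (h : 1 ≤ A.longestSuffixLen u r) :
    A.longestSuffixLen u r ≤ u.length ∧
      A.suffixReaches r (u.drop (u.length - A.longestSuffixLen u r)) := by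
  have h0 : A.longestSuffixLen u r ≠ 0 := by omega
  exact Nat.findGreatest_of_ne_zero (m := A.longestSuffixLen u r) rfl h0

/-- The central contradiction lemma. -/
lemma core [Fintype Q] (hcons : A.Consistent)
    {w : ℕ → α} {q0 : Q} (hq0' : A.muHat 1 q0 = A.init)
    {ρ : ℕ → Q} (hrun : A.IsSemRun w q0 ρ)
    {y X : ℕ} (hy1 : 1 ≤ y)
    (hymem : ∀ M : ℕ, ∃ i, M ≤ i ∧ A.layerOf (ρ i) (w i) = y)
    {N0 : ℕ} (hyev : ∀ i, N0 ≤ i → y ≤ A.layerOf (ρ i) (w i))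
    (hpin : ∀ i, A.layerOf (ρ i) (w i) = y →
      ρ (i + 1) = A.theta (List.ofFn fun j : Fin i => (ρ (j : ℕ), w (j : ℕ))) (ρ i) (w i))
    {n0 : ℕ} {p : Q} (hpl : A.layer p = X)
    (hpr : A.runList A.init (wordPrefix w n0) = some (A.muHat 1 p))
    (hps : A.SafeInf X p (wordDrop w n0))
    (hmax : ∀ z, A.UltSafeFrom A.init z w → z ≤ X)
    (hyX : y < X)
    (hEO : (Even X ∧ Odd y) ∨ (Odd X ∧ Even y)) : False := by
  set N' := max N0 n0 with hN'def
  have hN'0 : N0 ≤ N' := le_max_left _ _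
  have hN'n : n0 ≤ N' := le_max_right _ _
  have hyev' : ∀ i, N' ≤ i → y ≤ A.layerOf (ρ i) (w i) := fun i hi => hyev i (by omega)
  have hseg := A.run_seg hrun hy1 hyev'
  set s := A.muHat y (ρ N') with hsdef
  have hsl : A.layer s = y := A.layer_muHat hy1 (hseg 0).1
  have h1run : ∀ n, A.runList A.init (wordPrefix w n) = some (A.muHat 1 (ρ n)) := by
    intro n
    have h1 := (A.run_seg hrun le_rfl
      (fun i _ => A.one_le_layerOf (ρ i) (w i)) (N := 0) n).2
    rw [wordDrop_zero, hrun.1, hq0'] at h1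
    simpa using h1
  by_cases hc1 : ∃ (n' : ℕ) (p'' : Q), A.layer p'' = y + 1 ∧
      A.runList s (wordPrefix (wordDrop w N') n') = some (A.μ p'') ∧
      A.SafeInf (y + 1) p'' (wordDrop w (N' + n'))
  · -- Case 1 : pigeonhole on the longest-suffix witnesses
    obtain ⟨n', p'', hp''l, hp''r, hp''s⟩ := hc1
    set m := N' + n' with hmdef
    have hmN' : N' ≤ m := by omega
    have hsafe : ∀ k, (A.runList p'' (wordPrefix (wordDrop w m) k)).isSome = true := by
      intro k
      have := hp''s k
      unfold Layered.SafeFin at this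
      rwa [A.muHat_self hp''l] at this
    set Pr : ℕ → Q := fun k => (A.runList p'' (wordPrefix (wordDrop w m) k)).get (hsafe k)
      with hPrdef
    have hPr : ∀ k, A.runList p'' (wordPrefix (wordDrop w m) k) = some (Pr k) :=
      fun k => (Option.some_get (hsafe k)).symm
    have hPrl : ∀ k, A.layer (Pr k) = y + 1 := by
      intro k; rw [A.runList_layer (hPr k), hp''l]
    have hPrstep : ∀ k, A.δ (Pr k) (wordDrop w m k) = some (Pr (k + 1)) := by
      intro k
      have h2 := hPr (k + 1)
      rw [wordPrefix_succ, runList_append, hPr k, Option.bind_some, runList_single] at h2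
      exact h2
    have hPrμ : ∀ k, A.μ (Pr k) = A.muHat y (ρ (m + k)) := by
      intro k
      have h2 : A.runList (A.muHat y p'') (wordPrefix (wordDrop w m) k) =
          some (A.muHat y (Pr k)) :=
        A.runList_proj hy1 (by rw [hp''l]; omega) (hPr k)
      rw [A.muHat_of_succ_layer hp''l] at h2
      have h3 := (hseg (n' + k)).2
      rw [show wordPrefix (wordDrop w N') (n' + k) =
          wordPrefix (wordDrop w N') n' ++ wordPrefix (wordDrop w m) k from by
        rw [wordPrefix_add, wordDrop_wordDrop]] at h3
      rw [runList_append, hp''r, Option.bind_some] at h3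
      rw [h2] at h3
      have h4 : A.muHat y (Pr k) = A.muHat y (ρ (N' + (n' + k))) := by
        exact Option.some.inj h3
      rw [← A.muHat_of_succ_layer (hPrl k), h4]
      congr 2
      omega
    -- enumeration of the resets from time `m` on
    have hEx : ∀ M : ℕ, ∃ i, M ≤ i ∧ m ≤ i ∧ A.layerOf (ρ i) (w i) = y := by
      intro M
      obtain ⟨i, hi, he⟩ := hymem (max M m)
      exact ⟨i, le_trans (le_max_left _ _) hi, le_trans (le_max_right _ _) hi, he⟩
    set e : ℕ → ℕ :=
      fun k => Nat.rec (Nat.find (hEx 0)) (fun _ prev => Nat.find (hEx (prev + 1))) k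
      with hedef
    have heR : ∀ k, m ≤ e k ∧ A.layerOf (ρ (e k)) (w (e k)) = y := by
      intro k
      cases k with
      | zero => exact (Nat.find_spec (hEx 0)).2
      | succ k => exact (Nat.find_spec (hEx (e k + 1))).2
    have hestep : ∀ k, e k + 1 ≤ e (k + 1) := by
      intro k
      exact (Nat.find_spec (hEx (e k + 1))).1
    have hemono : StrictMono e := strictMono_nat_of_lt_succ (fun k => by
      have := hestep k; omega)
    have heMin : ∀ k j, e k < j → j < e (k + 1) → y + 1 ≤ A.layerOf (ρ j) (w j) := by
      intro k j h1 h2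
      have hmj : m ≤ j := le_trans (heR k).1 (le_of_lt h1)
      have hy' : y ≤ A.layerOf (ρ j) (w j) := hyev' j (by omega)
      have hnot := Nat.find_min (hEx (e k + 1)) h2
      by_contra hcon
      push_neg at hcon
      exact hnot ⟨by omega, hmj, by omega⟩
    -- the key per-reset witnesses
    have key : ∀ k : ℕ, ∃ (c : Q) (b : ℕ), b ≤ m ∧
        A.runList c (wordPrefix (wordDrop w b) (e k + 1 - b)) =
          some (A.muHat (y + 1) (ρ (e k + 1))) ∧
        A.runList c (wordPrefix (wordDrop w b) (e (k + 1) + 1 - b)) = none := by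
      intro k
      have hmi : m ≤ e k := (heR k).1
      have hprio : A.layerOf (ρ (e k)) (w (e k)) = y := (heR k).2
      have hpineq := hpin (e k) hprio
      -- candidate child above the safe run
      have hwi : wordDrop w m (e k - m) = w (e k) := by
        simp only [wordDrop]; congr 1; omega
      have hstep' := hPrstep (e k - m)
      rw [hwi] at hstep'
      have hμstep := A.μ_morph _ (w (e k)) _ (by rw [hPrl]; omega) hstep'
      have hPrμ' : A.μ (Pr (e k - m)) = A.muHat y (ρ (e k)) := by
        rw [hPrμ (e k - m)]; congr 2; omega
      rw [hPrμ'] at hμstep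
      -- realize as a semStep target
      obtain ⟨ℓ, hℓstep, hℓge, hℓμ⟩ := A.semStep_realize (t := Pr (e k - m + 1))
        (by rw [hprio]; exact hPrl _) (by rw [hprio]; exact hμstep)
      rw [hprio] at hℓge hℓμ
      have hex2 : ∃ q'', A.semStep (ρ (e k)) (w (e k)) q'' ∧
          A.layerOf (ρ (e k)) (w (e k)) + 1 ≤ A.layer q'' :=
        ⟨ℓ, hℓstep, by rw [hprio]; exact hℓge⟩
      have hopt := A.theta_opt (List.ofFn fun j : Fin (e k) => (ρ (j : ℕ), w (j : ℕ)))
        (ρ (e k)) (w (e k)) hex2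
      rw [← hpineq, hprio] at hopt
      have hu : (List.ofFn fun j : Fin (e k) => (ρ (j : ℕ), w (j : ℕ))).map Prod.snd
          ++ [w (e k)] = wordPrefix w (e k + 1) := by
        rw [wordPrefix_succ]
        congr 1
        rw [List.map_ofFn]
        rfl
      rw [hu] at hopt
      have hlen : (wordPrefix w (e k + 1)).length = e k + 1 := wordPrefix_length w _
      -- lower bound on the longest suffix of the chosen state
      have hreach : A.suffixReaches (Pr (e k - m + 1))
          ((wordPrefix w (e k + 1)).drop
            ((wordPrefix w (e k + 1)).length - (e k + 1 - m))) := by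
        rw [hlen, show e k + 1 - (e k + 1 - m) = m from by omega, wordPrefix_drop]
        refine ⟨p'', by rw [hp''l, hPrl], ?_⟩
        have h5 := hPr (e k - m + 1)
        rwa [show e k + 1 - m = e k - m + 1 from by omega]
      have hlb1 : e k + 1 - m ≤
          A.longestSuffixLen (wordPrefix w (e k + 1)) (Pr (e k - m + 1)) :=
        Nat.le_findGreatest (by rw [hlen]; omega) ⟨by rw [hlen]; omega, hreach⟩
      have hlb2 := hopt.2 ℓ hℓstep hℓge
      rw [hℓμ] at hlb2
      set L := A.longestSuffixLen (wordPrefix w (e k + 1))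
        (A.muHat (y + 1) (ρ (e k + 1))) with hLdef
      have hL1 : 1 ≤ L := by
        have : 1 ≤ e k + 1 - m := by omega
        omega
      have h6 := A.longestSuffixLen_spec (wordPrefix w (e k + 1))
        (A.muHat (y + 1) (ρ (e k + 1))) hL1
      have hLle := h6.1
      obtain ⟨c, hcl, hcr⟩ := h6.2
      rw [hlen] at hLle
      rw [hlen, wordPrefix_drop] at hcr
      -- death of the layer-(y+1) run at the next reset
      have hlayS : y + 1 ≤ A.layer (ρ (e k + 1)) := by
        have := hopt.1; omega
      have hdeath : ∀ j, e k + 1 ≤ j → (j ≤ e (k + 1) →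
          y + 1 ≤ A.layer (ρ j) ∧
          A.runList (A.muHat (y + 1) (ρ (e k + 1)))
              (wordPrefix (wordDrop w (e k + 1)) (j - (e k + 1))) =
            some (A.muHat (y + 1) (ρ j))) := by
        intro j hj
        induction j, hj using Nat.le_induction with
        | base =>
          intro _
          refine ⟨hlayS, ?_⟩
          rw [Nat.sub_self, wordPrefix_zero, runList_nil]
        | succ j hj ih =>
          intro hj2
          obtain ⟨ihl, ihr⟩ := ih (by omega)
          have hprioj : y + 1 ≤ A.layerOf (ρ j) (w j) := heMin k j (by omega) (by omega)
          have hstep := hrun.2 j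
          have hδ := A.semStep_proj hstep (by omega) hprioj
          constructor
          · exact le_trans hprioj (A.semStep_layer_le hstep)
          · rw [show j + 1 - (e k + 1) = (j - (e k + 1)) + 1 from by omega,
              wordPrefix_succ, runList_append, ihr, Option.bind_some,
              runList_single,
              show wordDrop w (e k + 1) (j - (e k + 1)) = w j from by
                simp only [wordDrop]; congr 1; omega]
            exact hδ
      have hdeathEnd := hdeath (e (k + 1)) (hestep k) le_rfl
      have hδnone : A.δ (A.muHat (y + 1) (ρ (e (k + 1)))) (w (e (k + 1))) = none := by
        apply A.layerOf_none
        · rw [(heR (k + 1)).2]; omega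
        · exact hdeathEnd.1
      have hnone : A.runList (A.muHat (y + 1) (ρ (e k + 1)))
          (wordPrefix (wordDrop w (e k + 1)) (e (k + 1) + 1 - (e k + 1))) = none := by
        rw [show e (k + 1) + 1 - (e k + 1) = (e (k + 1) - (e k + 1)) + 1 from by
            have := hestep k; omega,
          wordPrefix_succ, runList_append, hdeathEnd.2, Option.bind_some, runList_single,
          show wordDrop w (e k + 1) (e (k + 1) - (e k + 1)) = w (e (k + 1)) from by
            simp only [wordDrop]; have := hestep k; congr 1; omega]
        exact hδnone
      refine ⟨c, e k + 1 - L, by omega, ?_, ?_⟩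
      · exact hcr
      · rw [wordSeg_split w (b := e k + 1 - L) (j := e k + 1) (j' := e (k + 1) + 1)
          (by omega) (by have := hestep k; omega)]
        rw [runList_append, hcr, Option.bind_some]
        exact hnone
    -- pigeonhole
    choose cF bF hbF hsomeF hnoneF using key
    have hcontra : ∀ k1 k2 : ℕ, k1 < k2 → cF k1 = cF k2 → bF k1 = bF k2 → False := by
      intro k1 k2 hlt hceq hbeq
      have hle : e (k1 + 1) + 1 ≤ e k2 + 1 := by
        have := hemono.le_iff_le.2 (show k1 + 1 ≤ k2 from hlt)
        omega
      have hnone1 := hnoneF k1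
      have hsome2 := hsomeF k2
      rw [← hceq, ← hbeq] at hsome2
      rw [wordSeg_split w (b := bF k1) (j := e (k1 + 1) + 1) (j' := e k2 + 1)
        (by have := (heR k1).1; have := hestep k1; have := hbF k1; omega) hle] at hsome2
      rw [A.runList_none_append _ hnone1] at hsome2
      simp at hsome2
    set K := Fintype.card Q * (m + 1) with hKdef
    have hmaps : ∀ k ∈ Finset.range (K + 1),
        (cF k, bF k) ∈ (Finset.univ : Finset Q) ×ˢ Finset.range (m + 1) := by
      intro k _
      rw [Finset.mem_product]
      exact ⟨Finset.mem_univ _, Finset.mem_range.2 (by have := hbF k; omega)⟩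
    have hcard : ((Finset.univ : Finset Q) ×ˢ Finset.range (m + 1)).card <
        (Finset.range (K + 1)).card := by
      rw [Finset.card_product, Finset.card_range, Finset.card_range, Finset.card_univ]
      omega
    obtain ⟨k1, _, k2, _, hne, heq⟩ :=
      Finset.exists_ne_map_eq_of_card_lt_of_maps_to hcard hmaps
    have hcc : cF k1 = cF k2 := congrArg Prod.fst heq
    have hbb : bF k1 = bF k2 := congrArg Prod.snd heq
    rcases Nat.lt_or_ge k1 k2 with h | h
    · exact hcontra k1 k2 h hcc hbb
    · have : k2 < k1 := by omega
      exact hcontra k2 k1 this hcc.symm hbb.symm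
  · -- Case 2 : strong acceptance/rejection contradicting consistency
    have hsafep : ∀ k, (A.runList p (wordPrefix (wordDrop w n0) k)).isSome = true := by
      intro k
      have := hps k
      unfold Layered.SafeFin at this
      rwa [A.muHat_self hpl] at this
    set pN := (A.runList p (wordPrefix (wordDrop w n0) (N' - n0))).get (hsafep _) with hpNdef
    have hpNr : A.runList p (wordPrefix (wordDrop w n0) (N' - n0)) = some pN :=
      (Option.some_get _).symm
    have hpNl : A.layer pN = X := by rw [A.runList_layer hpNr, hpl]
    have hpNsafe : A.SafeInf X pN (wordDrop w N') := by
      intro k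
      unfold Layered.SafeFin
      rw [A.muHat_self hpNl]
      have h5 := hsafep (N' - n0 + k)
      rw [show wordPrefix (wordDrop w n0) (N' - n0 + k) =
          wordPrefix (wordDrop w n0) (N' - n0) ++ wordPrefix (wordDrop w N') k from by
        rw [wordPrefix_add, wordDrop_wordDrop, show n0 + (N' - n0) = N' from by omega]] at h5
      rwa [runList_append, hpNr, Option.bind_some] at h5
    have h6 : A.runList (A.muHat 1 p) (wordPrefix (wordDrop w n0) (N' - n0)) =
        some (A.muHat 1 pN) :=
      A.runList_proj le_rfl (by rw [hpl]; omega) hpNr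
    have hInitpN : A.runList A.init (wordPrefix w N') = some (A.muHat 1 pN) := by
      rw [show wordPrefix w N' = wordPrefix w n0 ++ wordPrefix (wordDrop w n0) (N' - n0) from by
        rw [← wordPrefix_add]; congr 1; omega]
      rw [runList_append, hpr, Option.bind_some]
      exact h6
    have hpNthird : ∀ (k : ℕ) (p' : Q), A.layer p' = A.layer pN + 1 →
        A.runList pN (wordPrefix (wordDrop w N') k) = some (A.μ p') →
        ¬ A.SafeInf (A.layer p') p' (wordDrop (wordDrop w N') k) := by
      intro k p' hl' hr' hs'
      rw [hpNl] at hl'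
      rw [wordDrop_wordDrop] at hs'
      have hult : A.UltSafeFrom A.init (X + 1) w := by
        refine ⟨N' + k, p', hl', ?_, ?_⟩
        · have h7 : A.runList (A.muHat 1 pN) (wordPrefix (wordDrop w N') k) =
              some (A.muHat 1 (A.μ p')) :=
            A.runList_proj le_rfl (by rw [hpNl]; omega) hr'
          have h8 : A.muHat 1 (A.μ p') = A.muHat 1 p' := by
            rw [← A.muHat_of_succ_layer hl']
            exact A.muHat_muHat le_rfl (by omega) (by rw [hl']; omega)
          rw [wordPrefix_add, runList_append, hInitpN, Option.bind_some, h7, h8]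
        · rw [hl'] at hs'
          exact hs'
      have := hmax _ hult
      omega
    have hssafe : A.SafeInf y s (wordDrop w N') := by
      intro k
      unfold Layered.SafeFin
      rw [A.muHat_self hsl, (hseg k).2]
      rfl
    have hsthird : ∀ (k : ℕ) (p' : Q), A.layer p' = A.layer s + 1 →
        A.runList s (wordPrefix (wordDrop w N') k) = some (A.μ p') →
        ¬ A.SafeInf (A.layer p') p' (wordDrop (wordDrop w N') k) := by
      intro k p' hl' hr' hs'
      rw [hsl] at hl'
      rw [wordDrop_wordDrop, hl'] at hs'
      exact hc1 ⟨k, p', hl', hr', hs'⟩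
    have hmu1 : A.muHat 1 s = A.muHat 1 pN := by
      have h9 : A.muHat 1 s = A.muHat 1 (ρ N') := by
        rw [hsdef]
        exact A.muHat_muHat le_rfl hy1 (hseg 0).1
      have h10 : A.muHat 1 pN = A.muHat 1 (ρ N') :=
        Option.some.inj ((hInitpN.symm).trans (h1run N'))
      rw [h9, h10]
    rcases hEO with ⟨hXeven, hyodd⟩ | ⟨hXodd, hyeven⟩
    · exact hcons ⟨pN, s, wordDrop w N', hmu1.symm,
        ⟨by rw [hpNl]; exact hXeven, by rw [hpNl]; exact hpNsafe, hpNthird⟩,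
        ⟨by rw [hsl]; exact hyodd, by rw [hsl]; exact hssafe, hsthird⟩⟩
    · exact hcons ⟨s, pN, wordDrop w N', hmu1,
        ⟨by rw [hsl]; exact hyeven, by rw [hsl]; exact hssafe, hsthird⟩,
        ⟨by rw [hpNl]; exact hXodd, by rw [hpNl]; exact hpNsafe, hpNthird⟩⟩

end Layered

section MinInf

lemma minInfOften_exists_ge {pi : ℕ → ℕ} {d : ℕ} (hub : ∀ i, pi i ≤ d) :
    ∀ N, ∃ n, N ≤ n ∧ pi n = minInfOften pi := by
  have hne : {x : ℕ | ∀ N : ℕ, ∃ n : ℕ, N ≤ n ∧ pi n = x}.Nonempty := by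
    by_contra hem
    rw [Set.not_nonempty_iff_eq_empty] at hem
    have h' : ∀ x : ℕ, ∃ N : ℕ, ∀ n, N ≤ n → pi n ≠ x := by
      intro x
      by_contra hx
      push_neg at hx
      have : x ∈ {x : ℕ | ∀ N : ℕ, ∃ n : ℕ, N ≤ n ∧ pi n = x} := by
        intro N; obtain ⟨n, hn, hne'⟩ := hx N; exact ⟨n, hn, hne'⟩
      rw [hem] at this; exact this
    choose f hf using h'
    exact hf (pi ((Finset.range (d + 1)).sup f))
      ((Finset.range (d + 1)).sup f)
      (Finset.le_sup (Finset.mem_range.2 (Nat.lt_succ_of_le (hub _)))) rfl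
  exact Nat.sInf_mem hne

lemma minInfOften_eventually (pi : ℕ → ℕ) :
    ∃ N, ∀ n, N ≤ n → minInfOften pi ≤ pi n := by
  have h' : ∀ z : ℕ, ∃ N : ℕ, z < minInfOften pi → ∀ n, N ≤ n → pi n ≠ z := by
    intro z
    by_cases hz : z < minInfOften pi
    · have hzmem : z ∉ {x : ℕ | ∀ N : ℕ, ∃ n : ℕ, N ≤ n ∧ pi n = x} :=
        Nat.notMem_of_lt_sInf hz
      simp only [Set.mem_setOf_eq, not_forall] at hzmem
      obtain ⟨N, hN⟩ := hzmem
      push_neg at hN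
      exact ⟨N, fun _ n hn => hN n hn⟩
    · exact ⟨0, fun h => absurd h hz⟩
  choose f hf using h'
  refine ⟨(Finset.range (minInfOften pi)).sup f, fun n hn => ?_⟩
  by_contra hlt
  push_neg at hlt
  exact hf (pi n) hlt n
    (le_trans (Finset.le_sup (Finset.mem_range.2 hlt)) hn) rfl

lemma one_le_minInfOften {pi : ℕ → ℕ} {d : ℕ} (hub : ∀ i, pi i ≤ d)
    (hlb : ∀ i, 1 ≤ pi i) : 1 ≤ minInfOften pi := by
  obtain ⟨n, _, hn⟩ := minInfOften_exists_ge hub 0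
  rw [← hn]; exact hlb n

end MinInf

namespace Layered

variable {Q α : Type} {d : ℕ} (A : Layered Q α d)

lemma maxUlt_mem (hd : 1 ≤ d) (w : ℕ → α) :
    A.UltSafeFrom A.init (Nat.findGreatest (fun x => A.UltSafeFrom A.init x w) d) w :=
  Nat.findGreatest_spec (P := fun x => A.UltSafeFrom A.init x w) hd (A.ultSafe_one w)

lemma maxUlt_max (w : ℕ → α) {z : ℕ} (h : A.UltSafeFrom A.init z w) :
    z ≤ Nat.findGreatest (fun x => A.UltSafeFrom A.init x w) d :=
  Nat.le_findGreatest (P := fun x => A.UltSafeFrom A.init x w) (A.ultSafe_le_d h) h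

lemma liminf_le_maxUlt {w : ℕ → α} {q0 : Q} {ρ : ℕ → Q}
    (hrun : A.IsSemRun w q0 ρ) (hq0' : A.muHat 1 q0 = A.init) :
    minInfOften (A.runPrios w ρ) ≤
      Nat.findGreatest (fun x => A.UltSafeFrom A.init x w) d := by
  have hub : ∀ i, A.runPrios w ρ i ≤ d := fun i =>
    le_trans (A.layerOf_le _ _) (A.layer_le _)
  have hlb : ∀ i, 1 ≤ A.runPrios w ρ i := fun i => A.one_le_layerOf _ _
  have hy1 : 1 ≤ minInfOften (A.runPrios w ρ) := one_le_minInfOften hub hlb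
  obtain ⟨N, hN⟩ := minInfOften_eventually (A.runPrios w ρ)
  exact A.maxUlt_max w (A.ult_of_eventually hrun hq0' hy1 hN)

lemma theta_eve_wins [Fintype Q] (hd : 1 ≤ d) (hcons : A.Consistent)
    {w : ℕ → α} {q0 : Q} (hq0' : A.muHat 1 q0 = A.init)
    (hX : Even (Nat.findGreatest (fun x => A.UltSafeFrom A.init x w) d))
    {ρ : ℕ → Q} (hrun : A.IsSemRun w q0 ρ) (hc : A.ConsEve A.theta w ρ) :
    ParityAccept (A.runPrios w ρ) := by
  by_contra hnot
  have hyodd : Odd (minInfOften (A.runPrios w ρ)) := Nat.not_even_iff_odd.1 hnot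
  have hub : ∀ i, A.runPrios w ρ i ≤ d := fun i =>
    le_trans (A.layerOf_le _ _) (A.layer_le _)
  have hlb : ∀ i, 1 ≤ A.runPrios w ρ i := fun i => A.one_le_layerOf _ _
  have hy1 : 1 ≤ minInfOften (A.runPrios w ρ) := one_le_minInfOften hub hlb
  have hyle := A.liminf_le_maxUlt hrun hq0'
  have hyX : minInfOften (A.runPrios w ρ) <
      Nat.findGreatest (fun x => A.UltSafeFrom A.init x w) d := by
    rcases Nat.lt_or_ge (minInfOften (A.runPrios w ρ))
      (Nat.findGreatest (fun x => A.UltSafeFrom A.init x w) d) with h | h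
    · exact h
    · exfalso
      have he : minInfOften (A.runPrios w ρ) =
          Nat.findGreatest (fun x => A.UltSafeFrom A.init x w) d := by omega
      rw [he] at hyodd
      exact (Nat.not_odd_iff_even.2 hX) hyodd
  obtain ⟨n0, p, hpl, hpr, hps⟩ := A.maxUlt_mem hd w
  obtain ⟨N0, hyev⟩ := minInfOften_eventually (A.runPrios w ρ)
  have hymem : ∀ M : ℕ, ∃ i, M ≤ i ∧
      A.layerOf (ρ i) (w i) = minInfOften (A.runPrios w ρ) := fun M =>
    minInfOften_exists_ge hub M
  have hpin : ∀ i, A.layerOf (ρ i) (w i) = minInfOften (A.runPrios w ρ) →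
      ρ (i + 1) = A.theta (List.ofFn fun j : Fin i => (ρ (j : ℕ), w (j : ℕ)))
        (ρ i) (w i) := by
    intro i hi
    refine hc i ?_
    show Odd (A.layerOf (ρ i) (w i))
    rw [hi]; exact hyodd
  exact A.core hcons hq0' hrun hy1 hymem hyev hpin hpl hpr hps
    (fun z hz => A.maxUlt_max w hz) hyX (Or.inl ⟨hX, hyodd⟩)

lemma theta_adam_wins [Fintype Q] (hd : 1 ≤ d) (hcons : A.Consistent)
    {w : ℕ → α} {q0 : Q} (hq0' : A.muHat 1 q0 = A.init)
    (hX : Odd (Nat.findGreatest (fun x => A.UltSafeFrom A.init x w) d))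
    {ρ : ℕ → Q} (hrun : A.IsSemRun w q0 ρ) (hc : A.ConsAdam A.theta w ρ) :
    ¬ ParityAccept (A.runPrios w ρ) := by
  intro hacc
  have hyeven : Even (minInfOften (A.runPrios w ρ)) := hacc
  have hub : ∀ i, A.runPrios w ρ i ≤ d := fun i =>
    le_trans (A.layerOf_le _ _) (A.layer_le _)
  have hlb : ∀ i, 1 ≤ A.runPrios w ρ i := fun i => A.one_le_layerOf _ _
  have hy1 : 1 ≤ minInfOften (A.runPrios w ρ) := one_le_minInfOften hub hlb
  have hyle := A.liminf_le_maxUlt hrun hq0'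
  have hyX : minInfOften (A.runPrios w ρ) <
      Nat.findGreatest (fun x => A.UltSafeFrom A.init x w) d := by
    rcases Nat.lt_or_ge (minInfOften (A.runPrios w ρ))
      (Nat.findGreatest (fun x => A.UltSafeFrom A.init x w) d) with h | h
    · exact h
    · exfalso
      have he : minInfOften (A.runPrios w ρ) =
          Nat.findGreatest (fun x => A.UltSafeFrom A.init x w) d := by omega
      rw [he] at hyeven
      exact (Nat.not_even_iff_odd.2 hX) hyeven
  obtain ⟨n0, p, hpl, hpr, hps⟩ := A.maxUlt_mem hd w
  obtain ⟨N0, hyev⟩ := minInfOften_eventually (A.runPrios w ρ)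
  have hymem : ∀ M : ℕ, ∃ i, M ≤ i ∧
      A.layerOf (ρ i) (w i) = minInfOften (A.runPrios w ρ) := fun M =>
    minInfOften_exists_ge hub M
  have hpin : ∀ i, A.layerOf (ρ i) (w i) = minInfOften (A.runPrios w ρ) →
      ρ (i + 1) = A.theta (List.ofFn fun j : Fin i => (ρ (j : ℕ), w (j : ℕ)))
        (ρ i) (w i) := by
    intro i hi
    refine hc i ?_
    show Even (A.layerOf (ρ i) (w i))
    rw [hi]; exact hyeven
  exact A.core hcons hq0' hrun hy1 hymem hyev hpin hpl hpr hps
    (fun z hz => A.maxUlt_max w hz) hyX (Or.inr ⟨hX, hyeven⟩)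

end Layered

end AuxStatement2

/-- For a consistent layered automaton `A`, the alternating parity
automaton `⟦A⟧` is history deterministic: there are resolvers `σ` for Eve and `τ` for
Adam with `L(⟦A⟧) = L(⟦A⟧,σ) = L(⟦A⟧,τ) = L(⟦A⟧,σ,τ)`. -/
theorem statement_2 {Q α : Type} [Fintype Q] [Fintype α] [Nonempty α] {d : ℕ} (hd : 1 ≤ d)
    (A : Layered Q α d) (hcons : A.Consistent)
    (q0 : Q) (hq0 : A.IsLeaf q0) (hq0' : A.muHat 1 q0 = A.init) :
    ∃ σ τ : List (Q × α) → Q → α → Q, A.EveResolver σ ∧ A.AdamResolver τ ∧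
      (∀ w : ℕ → α, A.SemAccept q0 w ↔
        (∀ ρ : ℕ → Q, A.IsSemRun w q0 ρ → A.ConsEve σ w ρ →
          ParityAccept (A.runPrios w ρ))) ∧
      (∀ w : ℕ → α, A.SemAccept q0 w ↔
        (∃ ρ : ℕ → Q, A.IsSemRun w q0 ρ ∧ A.ConsAdam τ w ρ ∧
          ParityAccept (A.runPrios w ρ))) ∧
      (∀ w : ℕ → α, A.SemAccept q0 w ↔
        (∀ ρ : ℕ → Q, A.IsSemRun w q0 ρ → A.ConsEve σ w ρ → A.ConsAdam τ w ρ →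
          ParityAccept (A.runPrios w ρ))) := by
  classical
  -- the θ-runs (both players following θ)
  have hthetaRun : ∀ w : ℕ → α,
      A.IsSemRun w q0 (fun i => (A.buildRun w q0 A.theta A.theta i).1) :=
    fun w => A.buildRun_isSemRun A.theta_eveResolver A.theta_adamResolver
  -- acceptance implies the maximal ultimately safe layer is even
  have hEvenOfAcc : ∀ w : ℕ → α, A.SemAccept q0 w →
      Even (Nat.findGreatest (fun x => A.UltSafeFrom A.init x w) d) := by
    intro w hacc
    obtain ⟨σ', hσ', hwin⟩ := hacc
    set ρ := fun i => (A.buildRun w q0 σ' A.theta i).1 with hρdef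
    have hrun : A.IsSemRun w q0 ρ := A.buildRun_isSemRun hσ' A.theta_adamResolver
    have hce : A.ConsEve σ' w ρ := A.buildRun_consEve
    have hca : A.ConsAdam A.theta w ρ := A.buildRun_consAdam
    have hpar : ParityAccept (A.runPrios w ρ) := hwin ρ hrun hce
    by_contra hnot
    exact A.theta_adam_wins hd hcons hq0' (Nat.not_even_iff_odd.1 hnot) hrun hca hpar
  have hAccOfEven : ∀ w : ℕ → α,
      Even (Nat.findGreatest (fun x => A.UltSafeFrom A.init x w) d) →
      A.SemAccept q0 w := by
    intro w hE
    exact ⟨A.theta, A.theta_eveResolver,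
      fun ρ hr hc => A.theta_eve_wins hd hcons hq0' hE hr hc⟩
  refine ⟨A.theta, A.theta, A.theta_eveResolver, A.theta_adamResolver, ?_, ?_, ?_⟩
  · intro w
    constructor
    · intro hacc ρ hr hc
      exact A.theta_eve_wins hd hcons hq0' (hEvenOfAcc w hacc) hr hc
    · intro hall
      exact ⟨A.theta, A.theta_eveResolver, hall⟩
  · intro w
    constructor
    · intro hacc
      refine ⟨fun i => (A.buildRun w q0 A.theta A.theta i).1, hthetaRun w,
        A.buildRun_consAdam, ?_⟩
      exact A.theta_eve_wins hd hcons hq0' (hEvenOfAcc w hacc) (hthetaRun w)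
        A.buildRun_consEve
    · intro ⟨ρ, hr, hca, hp⟩
      apply hAccOfEven w
      by_contra hnot
      exact A.theta_adam_wins hd hcons hq0' (Nat.not_even_iff_odd.1 hnot) hr hca hp
  · intro w
    constructor
    · intro hacc ρ hr hce _
      exact A.theta_eve_wins hd hcons hq0' (hEvenOfAcc w hacc) hr hce
    · intro hall
      apply hAccOfEven w
      have hp : ParityAccept (A.runPrios w (fun i => (A.buildRun w q0 A.theta A.theta i).1)) :=
        hall _ (hthetaRun w) A.buildRun_consEve A.buildRun_consAdam
      by_contra hnot
      exact A.theta_adam_wins hd hcons hq0' (Nat.not_even_iff_odd.1 hnot) (hthetaRun w)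
        A.buildRun_consAdam hp
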